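/- Let X be an Abelian topological group such that for every compact set K ⊆ X there exists a locally K-invariant Steinhaus-like Radon probability measure on X. If A and B are universally measurable subsets of X that are not Haar-null, then the set A − B = {a − b : a ∈ A, b ∈ B} is Haar-open in X. -/

import Mathlib

open MeasureTheory Topology

/-- Haar-open set: for every compact `K` and `p ∈ K` some translate `A + y = {z | z - y ∈ A}`
meets `K` in a neighborhood of `p` in `K`. -/
def IsHaarOpen {X : Type*} [TopologicalSpace X] [AddCommGroup X] (A : Set X) : Prop :=
  ∀ K : Set X, IsCompact K → ∀ p ∈ K, ∃ y : X, K ∩ {z | z - y ∈ A} ∈ 𝓝[K] p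

/-- Haar-null set: some Borel probability measure vanishes on all translates of `A`. -/
def IsHaarNull {X : Type*} [TopologicalSpace X] [AddCommGroup X] [MeasurableSpace X]
    (A : Set X) : Prop :=
  ∃ μ : Measure X, IsProbabilityMeasure μ ∧ ∀ x : X, μ {y | y - x ∈ A} = 0

/-- Universally measurable set: null-measurable with respect to every Borel probability
measure. -/
def UniversallyMeasurable {X : Type*} [MeasurableSpace X] (A : Set X) : Prop :=
  ∀ μ : Measure X, IsProbabilityMeasure μ → NullMeasurableSet A μ

/-- Steinhaus-like measure: symmetric, and any two sets of positive measure have translates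
with intersection of positive measure. -/
def SteinhausLike {X : Type*} [AddCommGroup X] [MeasurableSpace X] (μ : Measure X) : Prop :=
  (∀ B : Set X, MeasurableSet B → μ (-B) = μ B) ∧
  ∀ A B : Set X, MeasurableSet A → MeasurableSet B → 0 < μ A → 0 < μ B →
    ∃ a b : X, 0 < μ ({y | y - a ∈ A} ∩ {y | y - b ∈ B})

/-- Locally `K`-invariant measure. -/
def LocallyInvariant {X : Type*} [TopologicalSpace X] [AddCommGroup X] [MeasurableSpace X]
    (μ : Measure X) (K : Set X) : Prop :=
  ∃ M : ℕ → Set X, (∀ n, MeasurableSet (M n)) ∧ Monotone M ∧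
    Filter.Tendsto (fun n => μ (M n)) Filter.atTop (𝓝 1) ∧
    ∀ n : ℕ, ∃ U ∈ 𝓝 (0 : X), ∀ B ⊆ M n, MeasurableSet B →
      ∀ x ∈ U ∩ K, μ {y | y - x ∈ B} = μ B

open Pointwise in
/-- If every compact `K ⊆ X` admits a locally `K`-invariant Steinhaus-like Radon probability
measure and `A, B` are universally measurable non-Haar-null sets, then `A - B` is Haar-open. -/
theorem statement4 {X : Type*} [TopologicalSpace X] [AddCommGroup X] [IsTopologicalAddGroup X]
    [MeasurableSpace X] [BorelSpace X]
    (hX : ∀ K : Set X, IsCompact K → ∃ μ : Measure X,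
      IsProbabilityMeasure μ ∧ μ.Regular ∧ μ.InnerRegular ∧ SteinhausLike μ ∧
        LocallyInvariant μ K)
    (A B : Set X) (hA : UniversallyMeasurable A) (hB : UniversallyMeasurable B)
    (hAn : ¬ IsHaarNull A) (hBn : ¬ IsHaarNull B) :
    IsHaarOpen (A - B) := by
  intro K hK p hp
  -- the compact set of small translations we will use
  set K₀ : Set X := (fun x => x - p) '' K with hK₀def
  have hK₀ : IsCompact K₀ := hK.image (continuous_id.sub continuous_const)
  obtain ⟨μ, hprob, hreg, hinner, ⟨hsym, hst⟩, M, hMmeas, hMmono, hMtend, hMinv⟩ := hX K₀ hK₀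
  haveI := hprob; haveI := hreg; haveI := hinner
  -- translates of universally measurable sets are null-measurable
  have key : ∀ (S : Set X), UniversallyMeasurable S → ∀ c : X,
      NullMeasurableSet {y | y - c ∈ S} μ := by
    intro S hS c
    have hf : Measurable fun z : X => z - c := measurable_sub_const c
    have hprob' : IsProbabilityMeasure (Measure.map (fun z : X => z - c) μ) :=
      Measure.isProbabilityMeasure_map hf.aemeasurable
    exact (hS _ hprob').preimage ⟨hf, Measure.AbsolutelyContinuous.rfl⟩
  -- positive-measure translates
  have hAt : ∃ a₀ : X, μ {y | y - a₀ ∈ A} ≠ 0 := by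
    by_contra h; push_neg at h; exact hAn ⟨μ, hprob, h⟩
  have hBt : ∃ b₀ : X, μ {y | y - b₀ ∈ B} ≠ 0 := by
    by_contra h; push_neg at h; exact hBn ⟨μ, hprob, h⟩
  obtain ⟨a₀, ha₀⟩ := hAt
  obtain ⟨b₀, hb₀⟩ := hBt
  -- measurable cores
  obtain ⟨DA, hDAsub, hDAmeas, hDAae⟩ := (key A hA a₀).exists_measurable_subset_ae_eq
  obtain ⟨DB, hDBsub, hDBmeas, hDBae⟩ := (key B hB b₀).exists_measurable_subset_ae_eq
  have hDApos : 0 < μ DA := by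
    rw [measure_congr hDAae]; exact pos_iff_ne_zero.mpr ha₀
  have hDBpos : 0 < μ DB := by
    rw [measure_congr hDBae]; exact pos_iff_ne_zero.mpr hb₀
  -- Steinhaus-like property
  obtain ⟨a, b, hab⟩ := hst DA DB hDAmeas hDBmeas hDApos hDBpos
  set α : X := a₀ + a with hαdef
  set β : X := b₀ + b with hβdef
  set E₀ : Set X := {y | y - a ∈ DA} ∩ {y | y - b ∈ DB} with hE₀def
  have hE₀meas : MeasurableSet E₀ :=
    (hDAmeas.preimage (measurable_sub_const a)).inter
      (hDBmeas.preimage (measurable_sub_const b))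
  have hE₀A : E₀ ⊆ {y | y - α ∈ A} := by
    intro y hy
    have h1 : y - a ∈ DA := hy.1
    have h2 : (y - a) - a₀ ∈ A := hDAsub h1
    have : y - α = y - a - a₀ := by rw [hαdef]; abel
    rw [Set.mem_setOf_eq, this]; exact h2
  have hE₀B : E₀ ⊆ {y | y - β ∈ B} := by
    intro y hy
    have h1 : y - b ∈ DB := hy.2
    have h2 : (y - b) - b₀ ∈ B := hDBsub h1
    have : y - β = y - b - b₀ := by rw [hβdef]; abel
    rw [Set.mem_setOf_eq, this]; exact h2
  -- choose n with μ (E₀ ∩ M n) > 0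
  have hMU : μ (⋃ n, M n) = 1 :=
    tendsto_nhds_unique (tendsto_measure_iUnion_atTop hMmono) hMtend
  have hn : ∃ n, 0 < μ (E₀ ∩ M n) := by
    by_contra h
    push_neg at h
    have h0 : ∀ n, μ (E₀ ∩ M n) = 0 := fun n => le_antisymm (h n) (zero_le)
    have h1 : μ (E₀ ∩ ⋃ n, M n) = 0 := by
      rw [Set.inter_iUnion]
      exact measure_iUnion_null h0
    have h2 : μ (E₀ \ ⋃ n, M n) = 0 := by
      refine measure_mono_null (Set.diff_subset_compl _ _) ?_
      rw [prob_compl_eq_one_sub (MeasurableSet.iUnion hMmeas), hMU]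
      simp
    have := measure_le_inter_add_diff μ E₀ (⋃ n, M n)
    rw [h1, h2] at this
    simp only [add_zero, nonpos_iff_eq_zero] at this
    exact hab.ne' this
  obtain ⟨n, hnpos⟩ := hn
  set F : Set X := E₀ ∩ M n with hFdef
  have hFmeas : MeasurableSet F := hE₀meas.inter (hMmeas n)
  -- local invariance data
  obtain ⟨U, hU, hUinv⟩ := hMinv n
  -- compact core of positive measure
  obtain ⟨C, hCF, hCcomp, hCpos⟩ := hFmeas.exists_lt_isCompact hnpos
  have hClt : μ C < μ C + μ C :=
    ENNReal.lt_add_right (measure_lt_top μ C).ne hCpos.ne'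
  -- open O ⊇ C of measure < 2 μ C
  obtain ⟨O, hCO, hOopen, hOlt⟩ := Set.exists_isOpen_lt_of_lt C (μ C + μ C) hClt
  -- neighborhood W of 0 with C + W + W ⊆ O
  obtain ⟨V, hV, hCV⟩ := compact_open_separated_add_right hCcomp hOopen hCO
  obtain ⟨W, hWopen, hW0, hWW⟩ := exists_open_nhds_zero_add_subset hV
  have hCWW : ∀ c ∈ C, ∀ w₁ ∈ W, ∀ w₂ ∈ W, c + w₁ + w₂ ∈ O := by
    intro c hc w₁ hw₁ w₂ hw₂
    have : c + (w₁ + w₂) ∈ C + V := Set.add_mem_add hc (hWW (Set.add_mem_add hw₁ hw₂))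
    rw [← add_assoc] at this
    exact hCV this
  -- the measurable set D₁
  set D₁ : Set X := toMeasurable μ C ∩ F ∩ (C + W) with hD₁def
  have hD₁meas : MeasurableSet D₁ :=
    ((measurableSet_toMeasurable μ C).inter hFmeas).inter (hWopen.add_left).measurableSet
  have hCD₁ : C ⊆ D₁ := by
    intro c hc
    exact ⟨⟨subset_toMeasurable μ C hc, hCF hc⟩, ⟨c, hc, 0, hW0, by simp⟩⟩
  have hD₁F : D₁ ⊆ F := fun z hz => hz.1.2
  have hD₁CW : D₁ ⊆ C + W := fun z hz => hz.2
  have hD₁eq : μ D₁ = μ C := by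
    refine le_antisymm ?_ (measure_mono hCD₁)
    calc μ D₁ ≤ μ (toMeasurable μ C) := measure_mono fun z hz => hz.1.1
      _ = μ C := measure_toMeasurable C
  -- the translate y
  refine ⟨p + (α - β), ?_⟩
  -- V' is a neighborhood of p
  have hV' : {z : X | z - p ∈ U ∩ W} ∈ 𝓝 p := by
    have hcont : Continuous fun z : X => z - p := continuous_id.sub continuous_const
    have : U ∩ W ∈ 𝓝 ((fun z : X => z - p) p) := by
      simpa using Filter.inter_mem hU (hWopen.mem_nhds hW0)
    exact hcont.continuousAt.preimage_mem_nhds this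
  refine Filter.mem_of_superset
    (Filter.inter_mem self_mem_nhdsWithin (nhdsWithin_le_nhds hV')) ?_
  rintro x ⟨hxK, hxV⟩
  refine ⟨hxK, ?_⟩
  -- t is a small translation lying in K₀
  set t : X := x - p with htdef
  have htK₀ : t ∈ K₀ := ⟨x, hxK, rfl⟩
  have htU : t ∈ U := hxV.1
  have htW : t ∈ W := hxV.2
  -- translation by t preserves the measure of D₁
  set D₂ : Set X := {z | z - t ∈ D₁} with hD₂def
  have hD₂meas : MeasurableSet D₂ := hD₁meas.preimage (measurable_sub_const t)
  have hD₂eq : μ D₂ = μ C := by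
    rw [hD₂def, hUinv D₁ (fun z hz => (hD₁F hz).2) hD₁meas t ⟨htU, htK₀⟩, hD₁eq]
  -- D₁ ∪ D₂ ⊆ O
  have hunion : D₁ ∪ D₂ ⊆ O := by
    rintro z (hz | hz)
    · obtain ⟨c, hc, w, hw, rfl⟩ := hD₁CW hz
      simpa using hCWW c hc w hw 0 hW0
    · obtain ⟨c, hc, w, hw, hzw⟩ := hD₁CW hz
      have hz' : z = c + w + t := by
        have h := hzw.symm
        rwa [sub_eq_iff_eq_add] at h
      rw [hz']
      exact hCWW c hc w hw t htW
  -- positive measure of the intersection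
  have hinterpos : 0 < μ (D₁ ∩ D₂) := by
    have hue : μ (D₁ ∪ D₂) + μ (D₁ ∩ D₂) = μ D₁ + μ D₂ :=
      measure_union_add_inter D₁ hD₂meas
    by_contra h
    push_neg at h
    have h0 : μ (D₁ ∩ D₂) = 0 := le_antisymm h (zero_le)
    rw [h0, add_zero, hD₁eq, hD₂eq] at hue
    have : μ C + μ C ≤ μ O := hue ▸ measure_mono hunion
    exact absurd hOlt (not_lt.mpr this)
  obtain ⟨w, hw₁, hw₂⟩ := nonempty_of_measure_ne_zero hinterpos.ne'
  -- produce the witnesses in A and B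
  have hwA : w - α ∈ A := hE₀A (hD₁F hw₁).1
  have hwB : (w - t) - β ∈ B := hE₀B (hD₁F hw₂).1
  have hmem : (w - α) - ((w - t) - β) ∈ A - B := Set.sub_mem_sub hwA hwB
  have heq : (w - α) - ((w - t) - β) = x - (p + (α - β)) := by
    rw [htdef]; abel
  rw [Set.mem_setOf_eq, ← heq]
  exact hmem
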